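/- Let f be a formal Fourier series with \hat{f}(k) ≥ 0 for all |k| ≤ n. Then the norms of the truncated branching-Toeplitz matrix and the standard Toeplitz matrix coincide: ‖Γ_q^{(n)}[f]‖ = ‖T_n(f)‖, where T_n(f) = [\hat{f}(k-l)]_{0≤k,l≤n}. -/

import Mathlib

/-- Vertices of the rooted `q`-homogeneous tree, modelled as words over `Fin q`;
the root is the empty word and the children of `w` are the words `k :: w`. -/
abbrev Vertex (q : ℕ) := List (Fin q)

/-- `σ` is an ancestor of `τ` (i.e. `σ ⪯ τ`): `τ = w ++ σ` for some word `w`. -/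
def Anc {q : ℕ} (σ τ : Vertex q) : Prop := σ <:+ τ

/-- Two vertices are comparable (`(σ,τ) ∈ 𝒞`) if one is an ancestor of the other. -/
def Comp {q : ℕ} (σ τ : Vertex q) : Prop := σ <:+ τ ∨ τ <:+ σ

/-- Length of the longest common suffix, i.e. the generation of the last common
ancestor of the two vertices. -/
def lcs {q : ℕ} (σ τ : Vertex q) : ℕ :=
  ((σ.reverse.zip τ.reverse).takeWhile (fun p => decide (p.1 = p.2))).length

/-- The graph distance on the rooted `q`-homogeneous tree. -/
def tdist {q : ℕ} (σ τ : Vertex q) : ℕ := (σ.length - lcs σ τ) + (τ.length - lcs σ τ)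

instance {q : ℕ} (σ τ : Vertex q) : Decidable (Comp σ τ) :=
  inferInstanceAs (Decidable (σ <:+ τ ∨ τ <:+ σ))

/-- The branching-Toeplitz kernel
`Γ_q[f](σ₁,σ₂) = q^{-d(σ₁,σ₂)/2} · f̂(|σ₁|-|σ₂|) · 1_𝒞(σ₁,σ₂)` associated with a
formal Fourier series with coefficients `f̂ : ℤ → ℂ`. -/
noncomputable def btKer {q : ℕ} (f : ℤ → ℂ) (σ₁ σ₂ : Vertex q) : ℂ :=
  if Comp σ₁ σ₂ then
    ((q : ℝ) ^ (-(tdist σ₁ σ₂ : ℝ) / 2) : ℝ) * f ((σ₁.length : ℤ) - σ₂.length) else 0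

/-- The ball `B_n(T_q)` of vertices of generation at most `n`. -/
abbrev Ball (q n : ℕ) := {σ : Vertex q // σ.length ≤ n}

noncomputable instance (q n : ℕ) : Fintype (Ball q n) :=
  (List.finite_length_le (Fin q) n).fintype

/-- The truncated branching-Toeplitz matrix `Γ_q^{(n)}[f]` on `B_n(T_q)`. -/
noncomputable def btMat (q n : ℕ) (f : ℤ → ℂ) : Matrix (Ball q n) (Ball q n) ℂ :=
  fun σ₁ σ₂ => btKer f σ₁.1 σ₂.1

/-- The standard Toeplitz matrix `T_n(f) = [f̂(k-l)]_{0 ≤ k,l ≤ n}`. -/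
def toepMat (n : ℕ) (f : ℤ → ℂ) : Matrix (Fin (n + 1)) (Fin (n + 1)) ℂ :=
  fun k l => f ((k : ℤ) - (l : ℤ))

namespace BT
open Matrix
variable {q : ℕ}

lemma takeWhile_zip_append (a c : List (Fin q)) :
    ((a.zip (a ++ c)).takeWhile (fun p => decide (p.1 = p.2))).length = a.length := by
  induction a with
  | nil => simp
  | cons x a ih => simpa using ih

lemma takeWhile_zip_append' (a c : List (Fin q)) :
    (((a ++ c).zip a).takeWhile (fun p => decide (p.1 = p.2))).length = a.length := by
  induction a with
  | nil => simp
  | cons x a ih => simpa using ih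

lemma lcs_suffix_left {σ τ : Vertex q} (h : σ <:+ τ) : lcs σ τ = σ.length := by
  obtain ⟨w, rfl⟩ := h
  unfold lcs
  rw [List.reverse_append]
  simpa using takeWhile_zip_append σ.reverse w.reverse

lemma lcs_suffix_right {σ τ : Vertex q} (h : τ <:+ σ) : lcs σ τ = τ.length := by
  obtain ⟨w, rfl⟩ := h
  unfold lcs
  rw [List.reverse_append]
  simpa using takeWhile_zip_append' τ.reverse w.reverse

lemma tdist_suffix_left {σ τ : Vertex q} (h : σ <:+ τ) :
    tdist σ τ = τ.length - σ.length := by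
  have := h.length_le
  unfold tdist; rw [lcs_suffix_left h]; omega

lemma tdist_suffix_right {σ τ : Vertex q} (h : τ <:+ σ) :
    tdist σ τ = σ.length - τ.length := by
  have := h.length_le
  unfold tdist; rw [lcs_suffix_right h]; omega

lemma suffix_antisymm_len {σ τ : Vertex q} (h : σ <:+ τ) (hl : τ.length ≤ σ.length) : σ = τ := by
  rw [List.suffix_iff_eq_drop] at h
  have h2 : τ.length - σ.length = 0 := by omega
  rw [h, h2, List.drop_zero]

lemma comp_ge {σ τ : Vertex q} (h : Comp σ τ) (hl : τ.length ≤ σ.length) : τ <:+ σ := by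
  rcases h with h | h
  · rw [suffix_antisymm_len h hl]
  · exact h

lemma comp_lt {σ τ : Vertex q} (h : Comp σ τ) (hl : σ.length < τ.length) : σ <:+ τ := by
  rcases h with h | h
  · exact h
  · exact absurd h.length_le (by omega)

lemma card_above (n : ℕ) (v : Vertex q) (L : ℕ) (hL : L ≤ n) (hv : v.length ≤ L) :
    (Finset.univ.filter (fun τ : Ball q n => τ.1.length = L ∧ v <:+ τ.1)).card
      = q ^ (L - v.length) := by
  classical
  have hcv : q ^ (L - v.length) = Fintype.card (List.Vector (Fin q) (L - v.length)) := by
    rw [card_vector]; simp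
  rw [hcv, ← Finset.card_univ]
  refine (Finset.card_bij (fun (w : List.Vector (Fin q) (L - v.length)) _ =>
    (⟨w.1 ++ v, ?_⟩ : Ball q n)) ?_ ?_ ?_).symm
  · simp only [List.length_append, w.2]; omega
  · intro w _
    simp only [Finset.mem_filter, Finset.mem_univ, true_and]
    refine ⟨?_, List.suffix_append _ _⟩
    simp only [List.length_append, w.2]; omega
  · intro w₁ _ w₂ _ hw
    have := congrArg (fun x : Ball q n => x.1) hw
    simp only at this
    exact Subtype.ext (List.append_cancel_right this)
  · intro τ hτ
    simp only [Finset.mem_filter, Finset.mem_univ, true_and] at hτ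
    obtain ⟨hlen, w, hw⟩ := hτ
    have hwl : w.length = L - v.length := by
      have := congrArg List.length hw
      simp only [List.length_append] at this
      omega
    exact ⟨⟨w, hwl⟩, Finset.mem_univ _, Subtype.ext hw⟩

lemma filter_below (n : ℕ) (σ : Ball q n) (L : ℕ) (hL : L ≤ σ.1.length) :
    (Finset.univ.filter (fun τ : Ball q n => τ.1.length = L ∧ τ.1 <:+ σ.1))
      = {⟨σ.1.drop (σ.1.length - L), le_trans (by rw [List.length_drop]; omega) σ.2⟩} := by
  classical
  ext τ
  simp only [Finset.mem_filter, Finset.mem_univ, true_and, Finset.mem_singleton]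
  constructor
  · rintro ⟨hlen, hsuf⟩
    refine Subtype.ext ?_
    rw [List.suffix_iff_eq_drop] at hsuf
    rw [hsuf, hlen]
  · rintro rfl
    constructor
    · simp only [List.length_drop]; omega
    · exact List.drop_suffix _ _

/-! ### The isometry `U` -/

noncomputable def Umat (q n : ℕ) : Matrix (Ball q n) (Fin (n + 1)) ℂ :=
  fun σ k => if σ.1.length = (k : ℕ) then (((q : ℝ) ^ (-(k : ℝ) / 2) : ℝ) : ℂ) else 0

lemma rpq_mul (hq : 0 < q) (x y : ℝ) :
    (((q : ℝ) ^ x : ℝ) : ℂ) * (((q : ℝ) ^ y : ℝ) : ℂ) = (((q : ℝ) ^ (x + y) : ℝ) : ℂ) := by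
  rw [Real.rpow_add (by positivity), Complex.ofReal_mul]

lemma UconjU (hq : 0 < q) (n : ℕ) : (Umat q n)ᴴ * Umat q n = 1 := by
  classical
  ext k l
  simp only [Matrix.mul_apply, Matrix.conjTranspose_apply, Umat, Matrix.one_apply]
  by_cases hkl : k = l
  · subst hkl
    have hterm : ∀ σ : Ball q n,
        star (if σ.1.length = (k : ℕ) then (((q : ℝ) ^ (-(k : ℝ) / 2) : ℝ) : ℂ) else 0)
          * (if σ.1.length = (k : ℕ) then (((q : ℝ) ^ (-(k : ℝ) / 2) : ℝ) : ℂ) else 0)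
        = if σ.1.length = (k : ℕ) ∧ (([] : Vertex q) <:+ σ.1)
            then (((q : ℝ) ^ (-(k : ℝ)) : ℝ) : ℂ) else 0 := by
      intro σ
      by_cases h : σ.1.length = (k : ℕ)
      · rw [if_pos h, if_pos ⟨h, List.nil_suffix⟩,
          show star ((((q : ℝ) ^ (-(k : ℝ) / 2) : ℝ) : ℂ)) = (((q : ℝ) ^ (-(k : ℝ) / 2) : ℝ) : ℂ)
            from by rw [Complex.star_def, Complex.conj_ofReal],
          rpq_mul hq, show (-(k : ℝ) / 2 + -(k : ℝ) / 2) = -(k : ℝ) by ring]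
      · simp [h]
    rw [Finset.sum_congr rfl (fun σ _ => hterm σ), ← Finset.sum_filter,
      Finset.sum_const, card_above n [] (k : ℕ) k.is_le (by simp), nsmul_eq_mul]
    simp only [List.length_nil, Nat.sub_zero, if_pos rfl]
    rw [show ((q ^ (k : ℕ) : ℕ) : ℂ) = (((q : ℝ) ^ ((k : ℕ) : ℝ) : ℝ) : ℂ) by
      rw [Real.rpow_natCast]; push_cast; ring]
    rw [rpq_mul hq, show ((k : ℕ) : ℝ) + (-(k : ℝ)) = 0 by push_cast; ring, Real.rpow_zero]
    norm_num
  · have : ∀ σ : Ball q n,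
        star (if σ.1.length = (k : ℕ) then (((q : ℝ) ^ (-(k : ℝ) / 2) : ℝ) : ℂ) else 0)
          * (if σ.1.length = (l : ℕ) then (((q : ℝ) ^ (-(l : ℝ) / 2) : ℝ) : ℂ) else 0) = 0 := by
      intro σ
      by_cases h : σ.1.length = (k : ℕ)
      · have h2 : ¬ (σ.1.length = (l : ℕ)) := by
          intro h2; exact hkl (Fin.ext (by omega))
        simp [h2]
      · simp [h]
    rw [Finset.sum_congr rfl (fun σ _ => this σ)]
    simp [hkl]

lemma intertwine (hq : 0 < q) (n : ℕ) (g : ℤ → ℂ) :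
    btMat q n g * Umat q n = Umat q n * toepMat n g := by
  classical
  ext σ l
  have hσn : σ.1.length ≤ n := σ.2
  set k : ℕ := σ.1.length with hk
  -- RHS
  have hrhs : (Umat q n * toepMat n g) σ l
      = (((q : ℝ) ^ (-(k : ℝ) / 2) : ℝ) : ℂ) * g ((k : ℤ) - (l : ℕ)) := by
    rw [Matrix.mul_apply]
    rw [Finset.sum_eq_single (⟨k, by omega⟩ : Fin (n + 1))]
    · simp [Umat, toepMat, ← hk]
    · intro b _ hb
      have : ¬ (σ.1.length = (b : ℕ)) := by
        intro h
        apply hb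
        apply Fin.ext
        simp only [← h, hk]
      simp [Umat, this]
    · simp
  rw [hrhs, Matrix.mul_apply]
  by_cases hcase : (l : ℕ) ≤ k
  · -- unique comparable vertex below σ at level l
    have hterm : ∀ τ : Ball q n,
        btMat q n g σ τ * Umat q n τ l
        = if τ.1.length = (l : ℕ) ∧ τ.1 <:+ σ.1
            then (((q : ℝ) ^ (-((k - (l : ℕ) : ℕ) : ℝ) / 2) : ℝ) : ℂ) * g ((k : ℤ) - (l : ℕ))
              * (((q : ℝ) ^ (-(l : ℝ) / 2) : ℝ) : ℂ)
            else 0 := by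
      intro τ
      simp only [btMat, btKer, Umat]
      by_cases h1 : τ.1.length = (l : ℕ)
      · by_cases h2 : Comp σ.1 τ.1
        · have hsuf : τ.1 <:+ σ.1 := comp_ge h2 (by omega)
          rw [if_pos h2, if_pos h1, if_pos ⟨h1, hsuf⟩, tdist_suffix_right hsuf, h1]
        · have : ¬ (τ.1.length = (l : ℕ) ∧ τ.1 <:+ σ.1) := by
            rintro ⟨-, hs⟩; exact h2 (Or.inr hs)
          rw [if_neg h2, if_neg this, zero_mul]
      · have : ¬ (τ.1.length = (l : ℕ) ∧ τ.1 <:+ σ.1) := fun h => h1 h.1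
        rw [if_neg h1, if_neg this, mul_zero]
    rw [Finset.sum_congr rfl (fun τ _ => hterm τ), ← Finset.sum_filter,
      filter_below n σ (l : ℕ) (by omega), Finset.sum_singleton]
    have hC : (((q : ℝ) ^ (-((k - (l : ℕ) : ℕ) : ℝ) / 2) : ℝ) : ℂ)
        * (((q : ℝ) ^ (-(l : ℝ) / 2) : ℝ) : ℂ) = (((q : ℝ) ^ (-(k : ℝ) / 2) : ℝ) : ℂ) := by
      rw [rpq_mul hq, show (-((k - (l : ℕ) : ℕ) : ℝ) / 2 + -(l : ℝ) / 2) = -(k : ℝ) / 2 by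
        have : (((k - (l : ℕ) : ℕ)) : ℝ) = (k : ℝ) - ((l : ℕ) : ℝ) := by
          rw [Nat.cast_sub hcase]
        rw [this]; push_cast; ring]
    linear_combination g ((k : ℤ) - (l : ℕ)) * hC
  · -- the q^(l-k) comparable vertices above σ at level l
    push_neg at hcase
    have hterm : ∀ τ : Ball q n,
        btMat q n g σ τ * Umat q n τ l
        = if τ.1.length = (l : ℕ) ∧ σ.1 <:+ τ.1
            then (((q : ℝ) ^ (-(((l : ℕ) - k : ℕ) : ℝ) / 2) : ℝ) : ℂ) * g ((k : ℤ) - (l : ℕ))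
              * (((q : ℝ) ^ (-(l : ℝ) / 2) : ℝ) : ℂ)
            else 0 := by
      intro τ
      simp only [btMat, btKer, Umat]
      by_cases h1 : τ.1.length = (l : ℕ)
      · by_cases h2 : Comp σ.1 τ.1
        · have hsuf : σ.1 <:+ τ.1 := comp_lt h2 (by omega)
          rw [if_pos h2, if_pos h1, if_pos ⟨h1, hsuf⟩, tdist_suffix_left hsuf, h1]
        · have : ¬ (τ.1.length = (l : ℕ) ∧ σ.1 <:+ τ.1) := by
            rintro ⟨-, hs⟩; exact h2 (Or.inl hs)
          rw [if_neg h2, if_neg this, zero_mul]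
      · have : ¬ (τ.1.length = (l : ℕ) ∧ σ.1 <:+ τ.1) := fun h => h1 h.1
        rw [if_neg h1, if_neg this, mul_zero]
    rw [Finset.sum_congr rfl (fun τ _ => hterm τ), ← Finset.sum_filter,
      Finset.sum_const, card_above n σ.1 ((l : ℕ)) l.is_le (by omega), nsmul_eq_mul]
    have hC : ((q ^ ((l : ℕ) - k) : ℕ) : ℂ)
        * ((((q : ℝ) ^ (-((((l : ℕ) - k : ℕ)) : ℝ) / 2) : ℝ) : ℂ)
          * (((q : ℝ) ^ (-(l : ℝ) / 2) : ℝ) : ℂ))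
        = (((q : ℝ) ^ (-(k : ℝ) / 2) : ℝ) : ℂ) := by
      rw [rpq_mul hq,
        show ((q ^ ((l : ℕ) - k) : ℕ) : ℂ) = (((q : ℝ) ^ ((((l : ℕ) - k : ℕ)) : ℝ) : ℝ) : ℂ) by
          rw [Real.rpow_natCast]; push_cast; ring,
        rpq_mul hq]
      congr 1
      rw [show ((((l : ℕ) - k : ℕ)) : ℝ) = ((l : ℕ) : ℝ) - (k : ℝ) by
        rw [Nat.cast_sub (by omega)]]
      congr 1
      ring
    linear_combination g ((k : ℤ) - (l : ℕ)) * hC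

/-! ### conjTranspose and nonnegativity lemmas -/

lemma zip_takeWhile_comm (a b : List (Fin q)) :
    ((a.zip b).takeWhile (fun p => decide (p.1 = p.2))).length
      = ((b.zip a).takeWhile (fun p => decide (p.1 = p.2))).length := by
  induction a generalizing b with
  | nil => cases b <;> simp
  | cons x a ih =>
    cases b with
    | nil => simp
    | cons y b =>
      by_cases hxy : x = y
      · subst hxy
        simpa using ih b
      · simp [hxy, Ne.symm hxy]

lemma lcs_comm (σ τ : Vertex q) : lcs σ τ = lcs τ σ := by
  unfold lcs; exact zip_takeWhile_comm _ _

lemma tdist_comm (σ τ : Vertex q) : tdist σ τ = tdist τ σ := by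
  unfold tdist; rw [lcs_comm]; omega

lemma btMat_conjTranspose (n : ℕ) (f : ℤ → ℂ) :
    (btMat q n f)ᴴ = btMat q n (fun x => (starRingEnd ℂ) (f (-x))) := by
  ext σ τ
  simp only [conjTranspose_apply, btMat, btKer]
  by_cases h : Comp τ.1 σ.1
  · have h' : Comp σ.1 τ.1 := Or.symm h
    rw [if_pos h, if_pos h', star_mul', tdist_comm,
      show star ((((q : ℝ) ^ (-(tdist σ.1 τ.1 : ℝ) / 2) : ℝ)) : ℂ)
          = ((((q : ℝ) ^ (-(tdist σ.1 τ.1 : ℝ) / 2) : ℝ)) : ℂ)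
        from by rw [Complex.star_def, Complex.conj_ofReal],
      show -((σ.1.length : ℤ) - τ.1.length) = (τ.1.length : ℤ) - σ.1.length by ring]
    ring_nf
    rfl
  · have h' : ¬ Comp σ.1 τ.1 := fun hc => h (Or.symm hc)
    rw [if_neg h, if_neg h', star_zero]

lemma toepMat_conjTranspose (n : ℕ) (f : ℤ → ℂ) :
    (toepMat n f)ᴴ = toepMat n (fun x => (starRingEnd ℂ) (f (-x))) := by
  ext k l
  simp only [conjTranspose_apply, toepMat]
  congr 1
  ring

open scoped ComplexOrder in
lemma btMat_entry_nonneg {n : ℕ} (f : ℤ → ℂ) (hf : ∀ k : ℤ, |k| ≤ (n : ℤ) → 0 ≤ f k)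
    (σ τ : Ball q n) : (btMat q n f σ τ).im = 0 ∧ 0 ≤ (btMat q n f σ τ).re := by
  simp only [btMat, btKer]
  by_cases h : Comp σ.1 τ.1
  · rw [if_pos h]
    have hd : |(σ.1.length : ℤ) - τ.1.length| ≤ (n : ℤ) := by
      have h1 := σ.2; have h2 := τ.2
      rw [abs_le]; omega
    have hfz := hf _ hd
    rw [Complex.nonneg_iff] at hfz
    have hr : (0 : ℝ) ≤ (q : ℝ) ^ (-(tdist σ.1 τ.1 : ℝ) / 2) := by positivity
    constructor
    · simp [Complex.mul_im, ← hfz.2]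
    · simp only [Complex.mul_re, Complex.ofReal_re, Complex.ofReal_im, zero_mul, sub_zero]
      exact mul_nonneg hr hfz.1
  · rw [if_neg h]; simp

/-! ### Analytic layer -/

open ContinuousLinearMap
open scoped Matrix.Norms.L2Operator

lemma euclid_apply {n : ℕ} (M : Matrix (Ball q n) (Ball q n) ℂ)
    (x : EuclideanSpace ℂ (Ball q n)) (σ : Ball q n) :
    (toEuclideanCLM (𝕜 := ℂ) M) x σ = ∑ τ, M σ τ * x τ := by
  classical
  have h := congrFun (ofLp_toEuclideanCLM M x) σ
  simpa [Matrix.toLin'_apply, Matrix.mulVec, dotProduct] using h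

lemma exists_max {E : Type*} [NormedAddCommGroup E] [NormedSpace ℂ E]
    [FiniteDimensional ℂ E] [Nontrivial E] (𝒜 : E →L[ℂ] E) :
    ∃ x : E, ‖x‖ = 1 ∧ ‖𝒜 x‖ = ‖𝒜‖ := by
  obtain ⟨x, hx, hmax⟩ := (isCompact_sphere (0 : E) 1).exists_isMaxOn
    (NormedSpace.sphere_nonempty.mpr zero_le_one)
    (Continuous.continuousOn (𝒜.continuous.norm))
  rw [mem_sphere_zero_iff_norm] at hx
  have h1 : ‖𝒜 x‖ ≤ ‖𝒜‖ := by
    have := 𝒜.le_opNorm x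
    rwa [hx, mul_one] at this
  refine ⟨x, hx, le_antisymm h1 ?_⟩
  refine 𝒜.opNorm_le_bound (norm_nonneg _) (fun z => ?_)
  rcases eq_or_ne z 0 with rfl | hz
  · simp
  · have hz0 : 0 < ‖z‖ := norm_pos_iff.2 hz
    have hzs : ((‖z‖ : ℂ)⁻¹ • z) ∈ Metric.sphere (0 : E) 1 := by
      rw [mem_sphere_zero_iff_norm, norm_smul, norm_inv, Complex.norm_real, Real.norm_eq_abs,
        abs_of_pos hz0, inv_mul_cancel₀ hz0.ne']
    have hle := isMaxOn_iff.mp hmax _ hzs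
    rw [_root_.map_smul, norm_smul, norm_inv, Complex.norm_real, Real.norm_eq_abs,
      abs_of_pos hz0] at hle
    calc ‖𝒜 z‖ = ‖z‖ * (‖z‖⁻¹ * ‖𝒜 z‖) := by field_simp
      _ ≤ ‖z‖ * ‖𝒜 x‖ := mul_le_mul_of_nonneg_left hle hz0.le
      _ = ‖𝒜 x‖ * ‖z‖ := mul_comm _ _

end BT

open scoped ComplexOrder



local notation "⟪" x ", " y "⟫" => @inner ℂ _ _ x y

set_option maxHeartbeats 2000000 in
set_option synthInstance.maxHeartbeats 400000 in
open Matrix ContinuousLinearMap in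
open scoped Matrix.Norms.L2Operator in
/-- If `f̂(k) ≥ 0` for all `|k| ≤ n`, then the ℓ²-operator norms
of the truncated branching-Toeplitz matrix `Γ_q^{(n)}[f]` and of the standard
Toeplitz matrix `T_n(f) = [f̂(k-l)]` coincide. -/
theorem btMat_norm_eq_toepMat_norm_of_nonneg (q n : ℕ) (hq : 2 ≤ q) (hn : 1 ≤ n)
    (f : ℤ → ℂ) (hf : ∀ k : ℤ, |k| ≤ (n : ℤ) → 0 ≤ f k) :
    ‖Matrix.toEuclideanCLM (𝕜 := ℂ) (btMat q n f)‖ =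
      ‖Matrix.toEuclideanCLM (𝕜 := ℂ) (toepMat n f)‖ := by
  classical
  have hq0 : 0 < q := by omega
  rw [← Matrix.cstar_norm_def, ← Matrix.cstar_norm_def]
  set A := btMat q n f with hA
  set T := toepMat n f with hT
  set U := BT.Umat q n with hU
  have hUU : Uᴴ * U = 1 := BT.UconjU hq0 n
  have hAU : A * U = U * T := BT.intertwine hq0 n f
  have hAHU : Aᴴ * U = U * Tᴴ := by
    rw [hA, hT, BT.btMat_conjTranspose n f, BT.toepMat_conjTranspose n f]
    exact BT.intertwine hq0 n _
  -- norms of U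
  have hone : ‖(1 : Matrix (Fin (n+1)) (Fin (n+1)) ℂ)‖ = 1 := by
    rw [Matrix.cstar_norm_def, _root_.map_one]
    exact ContinuousLinearMap.norm_id
  have hU2 : ‖U‖ * ‖U‖ = 1 := by
    rw [← Matrix.l2_opNorm_conjTranspose_mul_self U, hUU, hone]
  have hUnorm : ‖U‖ = 1 := by
    rcases mul_self_eq_one_iff.mp hU2 with h | h
    · exact h
    · nlinarith [norm_nonneg U]
  have hUH : ‖Uᴴ‖ = 1 := by rw [Matrix.l2_opNorm_conjTranspose]; exact hUnorm
  -- easy direction : ‖T‖ ≤ ‖A‖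
  have hTle : ‖T‖ ≤ ‖A‖ := by
    have hTeq : T = Uᴴ * (A * U) := by
      rw [hAU, ← Matrix.mul_assoc, hUU, Matrix.one_mul]
    calc ‖T‖ = ‖Uᴴ * (A * U)‖ := by rw [← hTeq]
      _ ≤ ‖Uᴴ‖ * ‖A * U‖ := Matrix.l2_opNorm_mul _ _
      _ ≤ ‖Uᴴ‖ * (‖A‖ * ‖U‖) := by
          have h1 := Matrix.l2_opNorm_mul A U
          exact mul_le_mul_of_nonneg_left h1 (norm_nonneg _)
      _ = ‖A‖ := by rw [hUH, hUnorm]; ring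
  -- the projection P
  set P := U * Uᴴ with hP
  have hPH : Pᴴ = P := by
    rw [hP, conjTranspose_mul, conjTranspose_conjTranspose]
  have hPP : P * P = P := by
    calc (U * Uᴴ) * (U * Uᴴ) = U * ((Uᴴ * U) * Uᴴ) := by
          simp only [Matrix.mul_assoc]
      _ = U * Uᴴ := by rw [hUU, Matrix.one_mul]
  have hAP : A * P = U * (T * Uᴴ) := by
    rw [hP, ← Matrix.mul_assoc, hAU, Matrix.mul_assoc]
  have hB1 : (Aᴴ * A) * P = U * (Tᴴ * T) * Uᴴ := by
    calc (Aᴴ * A) * P = Aᴴ * (A * P) := by rw [Matrix.mul_assoc]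
      _ = (Aᴴ * U) * (T * Uᴴ) := by rw [hAP, Matrix.mul_assoc]
      _ = (U * Tᴴ) * (T * Uᴴ) := by rw [hAHU]
      _ = U * (Tᴴ * T) * Uᴴ := by simp only [Matrix.mul_assoc]
  have hUA : Uᴴ * Aᴴ = Tᴴ * Uᴴ := by
    have h1 := congrArg conjTranspose hAU
    simpa only [conjTranspose_mul] using h1
  have hUA2 : Uᴴ * A = T * Uᴴ := by
    have h1 := congrArg conjTranspose hAHU
    simpa only [conjTranspose_mul, conjTranspose_conjTranspose] using h1
  have hB2 : P * (Aᴴ * A) = U * (Tᴴ * T) * Uᴴ := by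
    calc P * (Aᴴ * A) = U * ((Uᴴ * Aᴴ) * A) := by rw [hP]; simp only [Matrix.mul_assoc]
      _ = U * ((Tᴴ * Uᴴ) * A) := by rw [hUA]
      _ = U * (Tᴴ * (Uᴴ * A)) := by simp only [Matrix.mul_assoc]
      _ = U * (Tᴴ * (T * Uᴴ)) := by rw [hUA2]
      _ = U * (Tᴴ * T) * Uᴴ := by simp only [Matrix.mul_assoc]
  have hBP : (Aᴴ * A) * P = P * (Aᴴ * A) := by rw [hB1, hB2]
  -- the CLM picture
  haveI : Nonempty (Ball q n) := ⟨⟨[], Nat.zero_le n⟩⟩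
  set 𝒜 := Matrix.toEuclideanCLM (𝕜 := ℂ) A with h𝒜
  set 𝒬 := Matrix.toEuclideanCLM (𝕜 := ℂ) P with h𝒬
  obtain ⟨x, hx1, hxA⟩ := BT.exists_max 𝒜
  -- the entrywise absolute value of x
  set y : EuclideanSpace ℂ (Ball q n) :=
    (WithLp.equiv 2 _).symm (fun σ => ((‖x σ‖ : ℝ) : ℂ)) with hy
  have hy_apply : ∀ σ, y σ = ((‖x σ‖ : ℝ) : ℂ) := fun σ => rfl
  have hy_comp : ∀ σ, ‖y σ‖ = ‖x σ‖ := by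
    intro σ
    rw [hy_apply, Complex.norm_real, Real.norm_eq_abs,
      abs_of_nonneg (norm_nonneg _)]
  have hy_norm : ‖y‖ = 1 := by
    rw [← hx1, EuclideanSpace.norm_eq, EuclideanSpace.norm_eq]
    congr 1
    exact Finset.sum_congr rfl (fun σ _ => by rw [hy_comp σ])
  have hAnn : ∀ σ τ, (A σ τ).im = 0 ∧ 0 ≤ (A σ τ).re :=
    fun σ τ => BT.btMat_entry_nonneg f hf σ τ
  -- componentwise comparison
  have hcomp : ∀ σ, ‖(𝒜 x) σ‖ ≤ ((𝒜 y) σ).re := by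
    intro σ
    rw [h𝒜, BT.euclid_apply, BT.euclid_apply]
    calc ‖∑ τ, A σ τ * x τ‖ ≤ ∑ τ, ‖A σ τ * x τ‖ := norm_sum_le _ _
      _ = ∑ τ, (A σ τ).re * ‖x τ‖ := by
          refine Finset.sum_congr rfl (fun τ _ => ?_)
          rw [norm_mul]
          congr 1
          obtain ⟨him, hre⟩ := hAnn σ τ
          rw [show A σ τ = (((A σ τ).re : ℝ) : ℂ) from Complex.ext rfl (by simp [him])]
          rw [Complex.norm_real, Real.norm_eq_abs]
          simpa using abs_of_nonneg hre
      _ = (∑ τ, A σ τ * y τ).re := by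
          rw [Complex.re_sum]
          refine Finset.sum_congr rfl (fun τ _ => ?_)
          rw [hy_apply, Complex.mul_re]
          obtain ⟨him, -⟩ := hAnn σ τ
          simp [him]
  have hAyA : ‖𝒜 y‖ = ‖𝒜‖ := by
    refine le_antisymm ?_ ?_
    · have := 𝒜.le_opNorm y
      rwa [hy_norm, mul_one] at this
    · rw [← hxA, EuclideanSpace.norm_eq, EuclideanSpace.norm_eq]
      apply Real.sqrt_le_sqrt
      refine Finset.sum_le_sum (fun σ _ => ?_)
      have h1 := hcomp σ
      have h2 : ((𝒜 y) σ).re ≤ ‖(𝒜 y) σ‖ := by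
        exact Complex.re_le_norm _
      nlinarith [norm_nonneg ((𝒜 x) σ), norm_nonneg ((𝒜 y) σ)]
  -- entries of P
  have hPent : ∀ σ τ : Ball q n, (P σ τ).im = 0 ∧ 0 ≤ (P σ τ).re := by
    intro σ τ
    rw [hP, Matrix.mul_apply]
    constructor
    · rw [Complex.im_sum]
      refine Finset.sum_eq_zero (fun k _ => ?_)
      simp only [Matrix.conjTranspose_apply, BT.Umat, hU]
      by_cases h1 : σ.1.length = (k : ℕ) <;> by_cases h2 : τ.1.length = (k : ℕ) <;>
        simp [h1, h2, Complex.mul_im]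
    · rw [Complex.re_sum]
      refine Finset.sum_nonneg (fun k _ => ?_)
      simp only [Matrix.conjTranspose_apply, BT.Umat, hU]
      by_cases h1 : σ.1.length = (k : ℕ) <;> by_cases h2 : τ.1.length = (k : ℕ) <;>
        simp [h1, h2, Complex.mul_re] <;> positivity
  have hPdiag : ∀ σ : Ball q n, 0 < (P σ σ).re := by
    intro σ
    rw [hP, Matrix.mul_apply, Complex.re_sum]
    have hterm : ∀ k : Fin (n + 1), 0 ≤ (U σ k * Uᴴ k σ).re := by
      intro k
      simp only [Matrix.conjTranspose_apply, BT.Umat, hU]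
      by_cases h1 : σ.1.length = (k : ℕ) <;> simp [h1, Complex.mul_re] <;> positivity
    have hσn : σ.1.length ≤ n := σ.2
    set k₀ : Fin (n + 1) := ⟨σ.1.length, by omega⟩ with hk₀
    have hpos : 0 < (U σ k₀ * Uᴴ k₀ σ).re := by
      rw [Matrix.conjTranspose_apply,
        show star (U σ k₀) = (starRingEnd ℂ) (U σ k₀) from rfl, Complex.mul_conj]
      simp only [Complex.ofReal_re]
      apply Complex.normSq_pos.mpr
      have hUk : U σ k₀ = (((q : ℝ) ^ (-(k₀ : ℝ) / 2) : ℝ) : ℂ) := by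
        simp [hU, BT.Umat, hk₀]
      rw [hUk]
      exact Complex.ofReal_ne_zero.mpr (by positivity)
    calc (0 : ℝ) < (U σ k₀ * Uᴴ k₀ σ).re := hpos
      _ ≤ ∑ k, (U σ k * Uᴴ k σ).re :=
          Finset.single_le_sum (fun k _ => hterm k) (Finset.mem_univ k₀)
  -- x has a nonzero entry
  obtain ⟨σ₀, hσ₀⟩ : ∃ σ, x σ ≠ 0 := by
    by_contra hcon
    push_neg at hcon
    have hx0 : x = 0 := by
      ext σ
      exact hcon σ
    rw [hx0] at hx1
    simp at hx1
  -- positivity of the projection of y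
  have hyim : ∀ τ, (y τ).im = 0 := fun τ => by rw [hy_apply]; simp
  have hyre : ∀ τ, 0 ≤ (y τ).re := fun τ => by
    rw [hy_apply]; simpa using norm_nonneg _
  have hr_ne : 𝒬 y ≠ 0 := by
    intro h0
    have hpos : 0 < ((𝒬 y) σ₀).re := by
      rw [h𝒬, BT.euclid_apply, Complex.re_sum]
      have hterm : ∀ τ, 0 ≤ (P σ₀ τ * y τ).re := by
        intro τ
        rw [Complex.mul_re, hyim τ, mul_zero, sub_zero]
        exact mul_nonneg (hPent σ₀ τ).2 (hyre τ)
      have hd : 0 < (P σ₀ σ₀ * y σ₀).re := by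
        rw [Complex.mul_re, hyim σ₀, mul_zero, sub_zero]
        refine mul_pos (hPdiag σ₀) ?_
        have := norm_pos_iff.mpr hσ₀
        rw [hy_apply]
        simpa using this
      calc (0 : ℝ) < (P σ₀ σ₀ * y σ₀).re := hd
        _ ≤ ∑ τ, (P σ₀ τ * y τ).re :=
            Finset.single_le_sum (fun τ _ => hterm τ) (Finset.mem_univ σ₀)
    rw [h0] at hpos
    simp at hpos
  have hrpos : 0 < ‖𝒬 y‖ := norm_pos_iff.2 hr_ne
  -- adjoints
  have h𝒜H : Matrix.toEuclideanCLM (𝕜 := ℂ) Aᴴ = adjoint 𝒜 := by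
    rw [← ContinuousLinearMap.star_eq_adjoint, h𝒜, ← map_star,
      Matrix.star_eq_conjTranspose]
  have h𝒬H : adjoint 𝒬 = 𝒬 := by
    rw [← ContinuousLinearMap.star_eq_adjoint, h𝒬, ← map_star,
      Matrix.star_eq_conjTranspose, hPH]
  have hPsa : ∀ a b : EuclideanSpace ℂ (Ball q n), ⟪𝒬 a, b⟫ = ⟪a, 𝒬 b⟫ := by
    intro a b
    calc ⟪𝒬 a, b⟫ = ⟪adjoint 𝒬 a, b⟫ := by rw [h𝒬H]
      _ = ⟪a, 𝒬 b⟫ := adjoint_inner_left 𝒬 b a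
  set ℬ := Matrix.toEuclideanCLM (𝕜 := ℂ) (Aᴴ * A) with hℬ
  have hinner : ∀ a b : EuclideanSpace ℂ (Ball q n), ⟪𝒜 a, 𝒜 b⟫ = ⟪ℬ a, b⟫ := by
    intro a b
    have h1 : ℬ a = adjoint 𝒜 (𝒜 a) := by
      rw [hℬ, _root_.map_mul, h𝒜H, ContinuousLinearMap.mul_apply]
    rw [h1]
    exact (adjoint_inner_left 𝒜 b (𝒜 a)).symm
  -- decomposition
  set r := 𝒬 y with hr
  set w := y - r with hw
  have hP2y : 𝒬 r = r := by
    rw [hr]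
    calc 𝒬 (𝒬 y) = (𝒬 * 𝒬) y := (ContinuousLinearMap.mul_apply 𝒬 𝒬 y).symm
      _ = Matrix.toEuclideanCLM (𝕜 := ℂ) (P * P) y := by rw [_root_.map_mul]
      _ = 𝒬 y := by rw [hPP]
  have hPw : 𝒬 w = 0 := by
    rw [hw, _root_.map_sub, hP2y, sub_self]
  have hBr : ℬ r = 𝒬 (ℬ y) := by
    calc ℬ r = ℬ (𝒬 y) := by rw [hr]
      _ = (ℬ * 𝒬) y := (ContinuousLinearMap.mul_apply ℬ 𝒬 y).symm
      _ = Matrix.toEuclideanCLM (𝕜 := ℂ) ((Aᴴ * A) * P) y := by rw [hℬ, h𝒬, ← _root_.map_mul]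
      _ = Matrix.toEuclideanCLM (𝕜 := ℂ) (P * (Aᴴ * A)) y := by rw [hBP]
      _ = (𝒬 * ℬ) y := by rw [hℬ, h𝒬, ← _root_.map_mul]
      _ = 𝒬 (ℬ y) := ContinuousLinearMap.mul_apply 𝒬 ℬ y
  have hcross : ⟪𝒜 r, 𝒜 w⟫ = 0 := by
    rw [hinner r w, hBr, hPsa, hPw]
    exact inner_zero_right _
  have hcross2 : ⟪r, w⟫ = 0 := by
    rw [hr, hPsa, hPw]
    exact inner_zero_right _
  -- Pythagoras
  have hsum : y = r + w := by rw [hw]; abel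
  have hy2 : ‖r‖ ^ 2 + ‖w‖ ^ 2 = 1 := by
    have := norm_add_sq (𝕜 := ℂ) r w
    rw [← hsum, hy_norm, hcross2] at this
    simp at this
    linarith
  have hAy2 : ‖𝒜 y‖ ^ 2 = ‖𝒜 r‖ ^ 2 + ‖𝒜 w‖ ^ 2 := by
    have h1 : 𝒜 y = 𝒜 r + 𝒜 w := by rw [hsum, _root_.map_add]
    have := norm_add_sq (𝕜 := ℂ) (𝒜 r) (𝒜 w)
    rw [← h1, hcross] at this
    simp at this
    linarith
  -- bound on the radial part
  have hAPnorm : ‖A * P‖ ≤ ‖T‖ := by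
    rw [hAP]
    calc ‖U * (T * Uᴴ)‖ ≤ ‖U‖ * ‖T * Uᴴ‖ := Matrix.l2_opNorm_mul _ _
      _ ≤ ‖U‖ * (‖T‖ * ‖Uᴴ‖) :=
          mul_le_mul_of_nonneg_left (Matrix.l2_opNorm_mul _ _) (norm_nonneg _)
      _ = ‖T‖ := by rw [hUnorm, hUH]; ring
  have hAr : ‖𝒜 r‖ ≤ ‖T‖ * ‖r‖ := by
    have h1 : 𝒜 r = Matrix.toEuclideanCLM (𝕜 := ℂ) (A * P) r := by
      calc 𝒜 r = 𝒜 (𝒬 r) := by rw [hP2y]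
        _ = (𝒜 * 𝒬) r := (ContinuousLinearMap.mul_apply 𝒜 𝒬 r).symm
        _ = Matrix.toEuclideanCLM (𝕜 := ℂ) (A * P) r := by rw [h𝒜, h𝒬, ← _root_.map_mul]
    rw [h1]
    calc ‖Matrix.toEuclideanCLM (𝕜 := ℂ) (A * P) r‖
        ≤ ‖Matrix.toEuclideanCLM (𝕜 := ℂ) (A * P)‖ * ‖r‖ := le_opNorm _ _
      _ ≤ ‖T‖ * ‖r‖ := by
          refine mul_le_mul_of_nonneg_right ?_ (norm_nonneg _)
          rw [← Matrix.cstar_norm_def]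
          exact hAPnorm
  have hAw : ‖𝒜 w‖ ≤ ‖𝒜‖ * ‖w‖ := le_opNorm _ _
  -- conclusion
  have hfinal : ‖𝒜‖ ≤ ‖T‖ := by
    have h1 : ‖𝒜‖ ^ 2 ≤ ‖T‖ ^ 2 * ‖r‖ ^ 2 + ‖𝒜‖ ^ 2 * ‖w‖ ^ 2 := by
      have e1 : ‖𝒜‖ ^ 2 = ‖𝒜 r‖ ^ 2 + ‖𝒜 w‖ ^ 2 := by rw [← hAy2, hAyA]
      have e2 : ‖𝒜 r‖ ^ 2 ≤ (‖T‖ * ‖r‖) ^ 2 := by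
        have := norm_nonneg (𝒜 r); nlinarith
      have e3 : ‖𝒜 w‖ ^ 2 ≤ (‖𝒜‖ * ‖w‖) ^ 2 := by
        have := norm_nonneg (𝒜 w); nlinarith
      nlinarith
    have h2 : ‖𝒜‖ ^ 2 * ‖r‖ ^ 2 ≤ ‖T‖ ^ 2 * ‖r‖ ^ 2 := by nlinarith [h1, hy2]
    have hr2 : 0 < ‖r‖ ^ 2 := by positivity
    have h3 : ‖𝒜‖ ^ 2 ≤ ‖T‖ ^ 2 := le_of_mul_le_mul_right (by linarith) hr2
    have hT0 : (0:ℝ) ≤ ‖T‖ := norm_nonneg _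
    have hA0 : (0:ℝ) ≤ ‖𝒜‖ := norm_nonneg _
    calc ‖𝒜‖ = Real.sqrt (‖𝒜‖ ^ 2) := (Real.sqrt_sq hA0).symm
      _ ≤ Real.sqrt (‖T‖ ^ 2) := Real.sqrt_le_sqrt h3
      _ = ‖T‖ := Real.sqrt_sq hT0
  exact le_antisymm (le_trans (le_of_eq (Matrix.cstar_norm_def A)) hfinal) hTle
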